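/- arXiv:2211.16185 — 5 statements merged into one kernel-verified Lean document; each statement's English description precedes it below -/
import Mathlib

section
/- Let X, Y, A, Z be finitely-valued random variables with joint pmf p such that (A, X, Z) forms a Markov chain A ↔ X ↔ Z and (Y, A, Z) forms a Markov chain Y ↔ A ↔ Z. Then for every real α ≥ 0: I(X;(A,Z)) − (1+α)·I(Y;Z) ≥ (2+α)·I(X;(A,Z)) − (1+α)·( I(X;Z) + I(X;A) ). Equivalently, for any real β, the DisGenIB objective I(X;(A,Z)) + I(A;Y) − β·I(X;A) − (1+α)·I(Y;Z) is bounded below by (2+α)·I(X;(A,Z)) − (1+α)·I(X;Z) + C′ with C′ = I(A;Y) − β·I(X;A) − (1+α)·I(X;A). -/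
/-- Mutual information `I(U;V)` of two finitely-valued random variables jointly
distributed according to the pmf `p` (given in curried form), with the convention
that terms with `p u v = 0` contribute `0` (here automatic, since `0 * log _ = 0`). -/
noncomputable def mutualInfo {α β : Type*} [Fintype α] [Fintype β] (p : α → β → ℝ) : ℝ :=
  ∑ u, ∑ v, p u v * Real.log (p u v / ((∑ v', p u v') * (∑ u', p u' v)))

open Finset Real


/-- Gibbs' inequality. -/
lemma gibbs_aux {ι : Type*} [Fintype ι] (f g : ι → ℝ) (hf : ∀ i, 0 ≤ f i)
    (hg : ∀ i, 0 ≤ g i) (hfg : ∀ i, g i = 0 → f i = 0)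
    (hsum : ∑ i, g i ≤ ∑ i, f i) :
    0 ≤ ∑ i, f i * Real.log (f i / g i) := by
  have key : ∀ i, f i - g i ≤ f i * Real.log (f i / g i) := by
    intro i
    rcases eq_or_lt_of_le (hf i) with h0 | h0
    · rw [← h0]; simpa using hg i
    · have hgi : 0 < g i := lt_of_le_of_ne (hg i) (fun h => by
        have := hfg i h.symm; linarith)
      have h1 : Real.log (g i / f i) ≤ g i / f i - 1 :=
        Real.log_le_sub_one_of_pos (by positivity)
      have h2 : Real.log (g i / f i) = - Real.log (f i / g i) := by
        rw [← Real.log_inv]; congr 1; field_simp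
      rw [h2] at h1
      have := mul_le_mul_of_nonneg_left (by linarith : 1 - g i / f i ≤ Real.log (f i / g i)) (le_of_lt h0)
      have hfi : f i * (1 - g i / f i) = f i - g i := by field_simp
      linarith [hfi ▸ this]
  calc (0:ℝ) ≤ ∑ i, f i - ∑ i, g i := by linarith
    _ = ∑ i, (f i - g i) := (Finset.sum_sub_distrib _ _).symm
    _ ≤ _ := Finset.sum_le_sum fun i _ => key i

lemma rot3 {α β γ : Type*} [Fintype α] [Fintype β] [Fintype γ] (f : α → β → γ → ℝ) :
    ∑ a, ∑ b, ∑ c, f a b c = ∑ c, ∑ a, ∑ b, f a b c := by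
  rw [show (∑ a, ∑ b, ∑ c, f a b c) = ∑ a, ∑ c, ∑ b, f a b c from
    Finset.sum_congr rfl fun _ _ => Finset.sum_comm]
  exact Finset.sum_comm

lemma swap23 {α β γ : Type*} [Fintype α] [Fintype β] [Fintype γ] (f : α → β → γ → ℝ) :
    ∑ a, ∑ b, ∑ c, f a b c = ∑ a, ∑ c, ∑ b, f a b c :=
  Finset.sum_congr rfl fun _ _ => Finset.sum_comm

lemma le_sum' {ι : Type*} [Fintype ι] {f : ι → ℝ} (h : ∀ i, 0 ≤ f i) (i : ι) :
    f i ≤ ∑ j, f j :=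
  Finset.single_le_sum (fun j _ => h j) (Finset.mem_univ i)

section
variable {X Y A Z : Type*} [Fintype X] [Fintype Y] [Fintype A] [Fintype Z]

/-- The mutual information `I(A;Z)` expressed directly. -/
noncomputable def cAZ (p : X → Y → A → Z → ℝ) : ℝ :=
  ∑ a, ∑ z, (∑ x, ∑ y, p x y a z) *
    Real.log ((∑ x, ∑ y, p x y a z) /
      ((∑ x, ∑ y, ∑ z', p x y a z') * (∑ x, ∑ y, ∑ a', p x y a' z)))

lemma E1 (p : X → Y → A → Z → ℝ) :
    mutualInfo (fun x (az : A × Z) => ∑ y, p x y az.1 az.2)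
      = ∑ x, ∑ a, ∑ z, (∑ y, p x y a z) *
          Real.log ((∑ y, p x y a z) /
            ((∑ y, ∑ a', ∑ z', p x y a' z') * (∑ x', ∑ y, p x' y a z))) := by
  unfold mutualInfo
  simp only [Fintype.sum_prod_type]
  refine Finset.sum_congr rfl fun x _ => Finset.sum_congr rfl fun a _ =>
    Finset.sum_congr rfl fun z _ => ?_
  rw [show (∑ a', ∑ z', ∑ y, p x y a' z') = ∑ y, ∑ a', ∑ z', p x y a' z' from
    rot3 (fun a' z' y => p x y a' z')]

lemma E2 (p : X → Y → A → Z → ℝ) :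
    mutualInfo (fun x a => ∑ y, ∑ z, p x y a z)
      = ∑ x, ∑ a, ∑ z, (∑ y, p x y a z) *
          Real.log ((∑ y, ∑ z', p x y a z') /
            ((∑ y, ∑ a', ∑ z', p x y a' z') * (∑ x', ∑ y, ∑ z', p x' y a z'))) := by
  unfold mutualInfo
  refine Finset.sum_congr rfl fun x _ => Finset.sum_congr rfl fun a _ => ?_
  rw [show (∑ a', ∑ y, ∑ z', p x y a' z') = ∑ y, ∑ a', ∑ z', p x y a' z' from
    Finset.sum_comm]
  rw [show (∑ y, ∑ z, p x y a z) * Real.log ((∑ y, ∑ z', p x y a z') /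
        ((∑ y, ∑ a', ∑ z', p x y a' z') * (∑ x', ∑ y, ∑ z', p x' y a z')))
      = ∑ z, (∑ y, p x y a z) * Real.log ((∑ y, ∑ z', p x y a z') /
        ((∑ y, ∑ a', ∑ z', p x y a' z') * (∑ x', ∑ y, ∑ z', p x' y a z'))) from by
    rw [← Finset.sum_mul, show (∑ z, ∑ y, p x y a z) = ∑ y, ∑ z, p x y a z from
      Finset.sum_comm]]

lemma E3 (p : X → Y → A → Z → ℝ) :
    mutualInfo (fun x z => ∑ y, ∑ a, p x y a z)
      = ∑ x, ∑ a, ∑ z, (∑ y, p x y a z) *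
          Real.log ((∑ y, ∑ a', p x y a' z) /
            ((∑ y, ∑ a', ∑ z', p x y a' z') * (∑ x', ∑ y, ∑ a', p x' y a' z))) := by
  unfold mutualInfo
  refine Finset.sum_congr rfl fun x _ => ?_
  rw [show (∑ a, ∑ z, (∑ y, p x y a z) *
          Real.log ((∑ y, ∑ a', p x y a' z) /
            ((∑ y, ∑ a', ∑ z', p x y a' z') * (∑ x', ∑ y, ∑ a', p x' y a' z))))
      = ∑ z, ∑ a, (∑ y, p x y a z) *
          Real.log ((∑ y, ∑ a', p x y a' z) /
            ((∑ y, ∑ a', ∑ z', p x y a' z') * (∑ x', ∑ y, ∑ a', p x' y a' z)))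
    from Finset.sum_comm]
  refine Finset.sum_congr rfl fun z _ => ?_
  rw [show (∑ z', ∑ y, ∑ a, p x y a z') = ∑ y, ∑ a, ∑ z', p x y a z' from
    (rot3 (fun y a z' => p x y a z')).symm]
  rw [← Finset.sum_mul, show (∑ a, ∑ y, p x y a z) = ∑ y, ∑ a, p x y a z from
    Finset.sum_comm]

lemma E4 (p : X → Y → A → Z → ℝ) :
    cAZ p = ∑ x, ∑ a, ∑ z, (∑ y, p x y a z) *
          Real.log ((∑ x', ∑ y, p x' y a z) /
            ((∑ x', ∑ y, ∑ z', p x' y a z') * (∑ x', ∑ y, ∑ a', p x' y a' z))) := by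
  unfold cAZ
  rw [show (∑ x, ∑ a, ∑ z, (∑ y, p x y a z) *
          Real.log ((∑ x', ∑ y, p x' y a z) /
            ((∑ x', ∑ y, ∑ z', p x' y a z') * (∑ x', ∑ y, ∑ a', p x' y a' z))))
      = ∑ a, ∑ z, ∑ x, (∑ y, p x y a z) *
          Real.log ((∑ x', ∑ y, p x' y a z) /
            ((∑ x', ∑ y, ∑ z', p x' y a z') * (∑ x', ∑ y, ∑ a', p x' y a' z)))
    from (rot3 _).symm]
  refine Finset.sum_congr rfl fun a _ => Finset.sum_congr rfl fun z _ => ?_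
  rw [← Finset.sum_mul]

lemma log_div_mul {u v w : ℝ} (hu : 0 < u) (hv : 0 < v) (hw : 0 < w) :
    Real.log (u / (v * w)) = Real.log u - Real.log v - Real.log w := by
  rw [Real.log_div hu.ne' (by positivity), Real.log_mul hv.ne' hw.ne']; ring

lemma lemA (p : X → Y → A → Z → ℝ) (hp0 : ∀ x y a z, 0 ≤ p x y a z)
    (hMarkovAXZ : ∀ x a z,
      (∑ y, p x y a z) * (∑ y, ∑ a', ∑ z', p x y a' z')
        = (∑ y, ∑ z', p x y a z') * (∑ y, ∑ a', p x y a' z)) :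
    mutualInfo (fun x (az : A × Z) => ∑ y, p x y az.1 az.2) + cAZ p
      = mutualInfo (fun x z => ∑ y, ∑ a, p x y a z)
        + mutualInfo (fun x a => ∑ y, ∑ z, p x y a z) := by
  have point : ∀ x a z,
      (∑ y, p x y a z) *
          Real.log ((∑ y, p x y a z) /
            ((∑ y, ∑ a', ∑ z', p x y a' z') * (∑ x', ∑ y, p x' y a z)))
        + (∑ y, p x y a z) *
          Real.log ((∑ x', ∑ y, p x' y a z) /
            ((∑ x', ∑ y, ∑ z', p x' y a z') * (∑ x', ∑ y, ∑ a', p x' y a' z)))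
      = (∑ y, p x y a z) *
          Real.log ((∑ y, ∑ a', p x y a' z) /
            ((∑ y, ∑ a', ∑ z', p x y a' z') * (∑ x', ∑ y, ∑ a', p x' y a' z)))
        + (∑ y, p x y a z) *
          Real.log ((∑ y, ∑ z', p x y a z') /
            ((∑ y, ∑ a', ∑ z', p x y a' z') * (∑ x', ∑ y, ∑ z', p x' y a z'))) := by
    intro x a z
    rcases eq_or_lt_of_le (Finset.sum_nonneg fun y _ => hp0 x y a z) with hq | hq
    · rw [← hq]; simp
    · have hpXA : 0 < ∑ y, ∑ z', p x y a z' :=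
        lt_of_lt_of_le hq (Finset.sum_le_sum fun y _ => le_sum' (fun z' => hp0 x y a z') z)
      have hpXZ : 0 < ∑ y, ∑ a', p x y a' z :=
        lt_of_lt_of_le hq (Finset.sum_le_sum fun y _ =>
          le_sum' (f := fun a' => p x y a' z) (fun a' => hp0 x y a' z) a)
      have hpX : 0 < ∑ y, ∑ a', ∑ z', p x y a' z' :=
        lt_of_lt_of_le hpXA (Finset.sum_le_sum fun y _ =>
          le_sum' (f := fun a' => ∑ z', p x y a' z')
            (fun a' => Finset.sum_nonneg fun z' _ => hp0 x y a' z') a)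
      have hpAZ : 0 < ∑ x', ∑ y, p x' y a z :=
        lt_of_lt_of_le hq (le_sum' (f := fun x' => ∑ y, p x' y a z)
          (fun x' => Finset.sum_nonneg fun y _ => hp0 x' y a z) x)
      have hpA : 0 < ∑ x', ∑ y, ∑ z', p x' y a z' :=
        lt_of_lt_of_le hpXA (le_sum' (f := fun x' => ∑ y, ∑ z', p x' y a z')
          (fun x' => Finset.sum_nonneg fun y _ => Finset.sum_nonneg fun z' _ => hp0 x' y a z') x)
      have hpZ : 0 < ∑ x', ∑ y, ∑ a', p x' y a' z :=
        lt_of_lt_of_le hpXZ (le_sum' (f := fun x' => ∑ y, ∑ a', p x' y a' z)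
          (fun x' => Finset.sum_nonneg fun y _ => Finset.sum_nonneg fun a' _ => hp0 x' y a' z) x)
      have hlog := congrArg Real.log (hMarkovAXZ x a z)
      rw [Real.log_mul hq.ne' hpX.ne', Real.log_mul hpXA.ne' hpXZ.ne'] at hlog
      rw [log_div_mul hq hpX hpAZ, log_div_mul hpAZ hpA hpZ,
        log_div_mul hpXZ hpX hpZ, log_div_mul hpXA hpX hpA]
      linear_combination (∑ y, p x y a z) * hlog
  have main := Finset.sum_congr (rfl : (Finset.univ : Finset X) = Finset.univ)
    fun x _ => Finset.sum_congr (rfl : (Finset.univ : Finset A) = Finset.univ)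
    fun a _ => Finset.sum_congr (rfl : (Finset.univ : Finset Z) = Finset.univ)
    fun z _ => point x a z
  rw [E1 p, E2 p, E3 p, E4 p]
  simpa [Finset.sum_add_distrib] using main

lemma gibbs3 {Y A Z : Type*} [Fintype Y] [Fintype A] [Fintype Z] (f g : Y → A → Z → ℝ)
    (hf : ∀ y a z, 0 ≤ f y a z) (hg : ∀ y a z, 0 ≤ g y a z)
    (hfg : ∀ y a z, g y a z = 0 → f y a z = 0)
    (hsum : ∑ y, ∑ a, ∑ z, g y a z ≤ ∑ y, ∑ a, ∑ z, f y a z) :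
    0 ≤ ∑ y, ∑ a, ∑ z, f y a z * Real.log (f y a z / g y a z) := by
  have h := gibbs_aux (ι := Y × A × Z) (fun t => f t.1 t.2.1 t.2.2) (fun t => g t.1 t.2.1 t.2.2)
    (fun t => hf _ _ _) (fun t => hg _ _ _) (fun t => hfg _ _ _)
    (by simpa [Fintype.sum_prod_type] using hsum)
  simpa [Fintype.sum_prod_type] using h

lemma E5 (p : X → Y → A → Z → ℝ) :
    mutualInfo (fun y z => ∑ x, ∑ a, p x y a z)
      = ∑ y, ∑ a, ∑ z, (∑ x, p x y a z) *
          Real.log ((∑ x, ∑ a', p x y a' z) /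
            ((∑ z', ∑ x, ∑ a', p x y a' z') * (∑ x, ∑ y', ∑ a', p x y' a' z))) := by
  unfold mutualInfo
  refine Finset.sum_congr rfl fun y _ => ?_
  rw [show (∑ a, ∑ z, (∑ x, p x y a z) *
          Real.log ((∑ x, ∑ a', p x y a' z) /
            ((∑ z', ∑ x, ∑ a', p x y a' z') * (∑ x, ∑ y', ∑ a', p x y' a' z))))
      = ∑ z, ∑ a, (∑ x, p x y a z) *
          Real.log ((∑ x, ∑ a', p x y a' z) /
            ((∑ z', ∑ x, ∑ a', p x y a' z') * (∑ x, ∑ y', ∑ a', p x y' a' z)))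
    from Finset.sum_comm]
  refine Finset.sum_congr rfl fun z _ => ?_
  rw [show (∑ y', ∑ x, ∑ a', p x y' a' z) = ∑ x, ∑ y', ∑ a', p x y' a' z from
    Finset.sum_comm]
  rw [← Finset.sum_mul, show (∑ a, ∑ x, p x y a z) = ∑ x, ∑ a, p x y a z from
    Finset.sum_comm]

lemma E6 (p : X → Y → A → Z → ℝ) :
    cAZ p = ∑ y, ∑ a, ∑ z, (∑ x, p x y a z) *
          Real.log ((∑ x, ∑ y', p x y' a z) /
            ((∑ x, ∑ y', ∑ z', p x y' a z') * (∑ x, ∑ y', ∑ a', p x y' a' z))) := by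
  unfold cAZ
  rw [show (∑ y, ∑ a, ∑ z, (∑ x, p x y a z) *
          Real.log ((∑ x, ∑ y', p x y' a z) /
            ((∑ x, ∑ y', ∑ z', p x y' a z') * (∑ x, ∑ y', ∑ a', p x y' a' z))))
      = ∑ a, ∑ z, ∑ y, (∑ x, p x y a z) *
          Real.log ((∑ x, ∑ y', p x y' a z) /
            ((∑ x, ∑ y', ∑ z', p x y' a z') * (∑ x, ∑ y', ∑ a', p x y' a' z)))
    from (rot3 fun a z y => (∑ x, p x y a z) *
          Real.log ((∑ x, ∑ y', p x y' a z) /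
            ((∑ x, ∑ y', ∑ z', p x y' a z') * (∑ x, ∑ y', ∑ a', p x y' a' z)))).symm]
  refine Finset.sum_congr rfl fun a _ => Finset.sum_congr rfl fun z _ => ?_
  rw [show (∑ x, ∑ y, p x y a z) = ∑ y, ∑ x, p x y a z from Finset.sum_comm,
    ← Finset.sum_mul]

lemma lemB (p : X → Y → A → Z → ℝ) (hp0 : ∀ x y a z, 0 ≤ p x y a z)
    (hMarkovYAZ : ∀ a y z,
      (∑ x, p x y a z) * (∑ x, ∑ y', ∑ z', p x y' a z')
        = (∑ x, ∑ z', p x y a z') * (∑ x, ∑ y', p x y' a z)) :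
    mutualInfo (fun y z => ∑ x, ∑ a, p x y a z) ≤ cAZ p := by
  have point : ∀ y a z,
      (∑ x, p x y a z) *
          Real.log ((∑ x, ∑ y', p x y' a z) /
            ((∑ x, ∑ y', ∑ z', p x y' a z') * (∑ x, ∑ y', ∑ a', p x y' a' z)))
        - (∑ x, p x y a z) *
          Real.log ((∑ x, ∑ a', p x y a' z) /
            ((∑ z', ∑ x, ∑ a', p x y a' z') * (∑ x, ∑ y', ∑ a', p x y' a' z)))
      = (∑ x, p x y a z) *
          Real.log ((∑ x, p x y a z) /
            ((∑ x, ∑ z', p x y a z') * (∑ x, ∑ a', p x y a' z)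
              / (∑ z', ∑ x, ∑ a', p x y a' z'))) := by
    intro y a z
    rcases eq_or_lt_of_le (Finset.sum_nonneg fun x _ => hp0 x y a z) with hr | hr
    · rw [← hr]; simp
    · have hpYA : 0 < ∑ x, ∑ z', p x y a z' :=
        lt_of_lt_of_le hr (Finset.sum_le_sum fun x _ => le_sum' (fun z' => hp0 x y a z') z)
      have hpYZ : 0 < ∑ x, ∑ a', p x y a' z :=
        lt_of_lt_of_le hr (Finset.sum_le_sum fun x _ =>
          le_sum' (f := fun a' => p x y a' z) (fun a' => hp0 x y a' z) a)
      have hpAZ : 0 < ∑ x, ∑ y', p x y' a z :=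
        lt_of_lt_of_le hr (Finset.sum_le_sum fun x _ =>
          le_sum' (f := fun y' => p x y' a z) (fun y' => hp0 x y' a z) y)
      have hpA : 0 < ∑ x, ∑ y', ∑ z', p x y' a z' :=
        lt_of_lt_of_le hpYA (Finset.sum_le_sum fun x _ =>
          le_sum' (f := fun y' => ∑ z', p x y' a z')
            (fun y' => Finset.sum_nonneg fun z' _ => hp0 x y' a z') y)
      have hpZ : 0 < ∑ x, ∑ y', ∑ a', p x y' a' z :=
        lt_of_lt_of_le hpYZ (Finset.sum_le_sum fun x _ =>
          le_sum' (f := fun y' => ∑ a', p x y' a' z)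
            (fun y' => Finset.sum_nonneg fun a' _ => hp0 x y' a' z) y)
      have hpY : 0 < ∑ z', ∑ x, ∑ a', p x y a' z' :=
        lt_of_lt_of_le hpYZ (le_sum' (f := fun z' => ∑ x, ∑ a', p x y a' z')
          (fun z' => Finset.sum_nonneg fun x _ => Finset.sum_nonneg fun a' _ => hp0 x y a' z') z)
      have hRHS : Real.log ((∑ x, p x y a z) /
            ((∑ x, ∑ z', p x y a z') * (∑ x, ∑ a', p x y a' z)
              / (∑ z', ∑ x, ∑ a', p x y a' z')))
          = Real.log (∑ x, p x y a z) - Real.log (∑ x, ∑ z', p x y a z')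
            - Real.log (∑ x, ∑ a', p x y a' z) + Real.log (∑ z', ∑ x, ∑ a', p x y a' z') := by
        rw [Real.log_div hr.ne' (by positivity), Real.log_div (by positivity) hpY.ne',
          Real.log_mul hpYA.ne' hpYZ.ne']
        ring
      have hlog := congrArg Real.log (hMarkovYAZ a y z)
      rw [Real.log_mul hr.ne' hpA.ne', Real.log_mul hpYA.ne' hpAZ.ne'] at hlog
      rw [log_div_mul hpAZ hpA hpZ, log_div_mul hpYZ hpY hpZ, hRHS]
      linear_combination (-(∑ x, p x y a z)) * hlog
  have main := Finset.sum_congr (rfl : (Finset.univ : Finset Y) = Finset.univ)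
    fun y _ => Finset.sum_congr (rfl : (Finset.univ : Finset A) = Finset.univ)
    fun a _ => Finset.sum_congr (rfl : (Finset.univ : Finset Z) = Finset.univ)
    fun z _ => point y a z
  simp only [Finset.sum_sub_distrib] at main
  have hgibbs : 0 ≤ ∑ y, ∑ a, ∑ z, (∑ x, p x y a z) *
      Real.log ((∑ x, p x y a z) /
        ((∑ x, ∑ z', p x y a z') * (∑ x, ∑ a', p x y a' z)
          / (∑ z', ∑ x, ∑ a', p x y a' z'))) := by
    refine gibbs3 (fun y a z => ∑ x, p x y a z)
      (fun y a z => (∑ x, ∑ z', p x y a z') * (∑ x, ∑ a', p x y a' z)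
          / (∑ z', ∑ x, ∑ a', p x y a' z'))
      (fun y a z => Finset.sum_nonneg fun x _ => hp0 x y a z)
      (fun y a z => div_nonneg (mul_nonneg
        (Finset.sum_nonneg fun x _ => Finset.sum_nonneg fun z' _ => hp0 x y a z')
        (Finset.sum_nonneg fun x _ => Finset.sum_nonneg fun a' _ => hp0 x y a' z))
        (Finset.sum_nonneg fun z' _ => Finset.sum_nonneg fun x _ =>
          Finset.sum_nonneg fun a' _ => hp0 x y a' z')) ?_ ?_
    · -- absolute continuity
      intro y a z h
      have h1 : (∑ x, p x y a z) ≤ ∑ x, ∑ a', p x y a' z :=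
        Finset.sum_le_sum fun x _ => le_sum' (f := fun a' => p x y a' z) (fun a' => hp0 x y a' z) a
      have h1' : (∑ x, p x y a z) ≤ ∑ x, ∑ z', p x y a z' :=
        Finset.sum_le_sum fun x _ => le_sum' (fun z' => hp0 x y a z') z
      have h2 : (∑ x, ∑ a', p x y a' z) ≤ ∑ z', ∑ x, ∑ a', p x y a' z' :=
        le_sum' (f := fun z' => ∑ x, ∑ a', p x y a' z')
          (fun z' => Finset.sum_nonneg fun x _ => Finset.sum_nonneg fun a' _ => hp0 x y a' z') z
      have hnn : (0:ℝ) ≤ ∑ x, p x y a z := Finset.sum_nonneg fun x _ => hp0 x y a z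
      rcases div_eq_zero_iff.mp h with h' | h'
      · rcases mul_eq_zero.mp h' with h'' | h''
        · exact le_antisymm (h1'.trans h''.le) hnn
        · exact le_antisymm (h1.trans h''.le) hnn
      · exact le_antisymm (h1.trans (h2.trans h'.le)) hnn
    · -- sums compare
      refine Finset.sum_le_sum fun y _ => ?_
      rcases eq_or_lt_of_le (Finset.sum_nonneg fun z' _ => Finset.sum_nonneg fun x _ =>
          Finset.sum_nonneg fun a' _ => hp0 x y a' z' :
          (0:ℝ) ≤ ∑ z', ∑ x, ∑ a', p x y a' z') with hY | hY
      · have hz : (∑ a, ∑ z, (∑ x, ∑ z', p x y a z') * (∑ x, ∑ a', p x y a' z)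
            / (∑ z', ∑ x, ∑ a', p x y a' z')) = 0 :=
          Finset.sum_eq_zero fun a _ => Finset.sum_eq_zero fun z _ => by
            rw [← hY]; exact div_zero _
        rw [hz]
        exact Finset.sum_nonneg fun a _ => Finset.sum_nonneg fun z _ =>
          Finset.sum_nonneg fun x _ => hp0 x y a z
      · have step1 : (∑ a, ∑ z, (∑ x, ∑ z', p x y a z') * (∑ x, ∑ a', p x y a' z)
            / (∑ z', ∑ x, ∑ a', p x y a' z')) = ∑ a, ∑ x, ∑ z', p x y a z' := by
          refine Finset.sum_congr rfl fun a _ => ?_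
          rw [show (∑ z, (∑ x, ∑ z', p x y a z') * (∑ x, ∑ a', p x y a' z)
              / (∑ z', ∑ x, ∑ a', p x y a' z'))
            = (∑ x, ∑ z', p x y a z') * (∑ z, ∑ x, ∑ a', p x y a' z)
              / (∑ z', ∑ x, ∑ a', p x y a' z') from by
            rw [← Finset.sum_div, ← Finset.mul_sum]]
          rw [mul_div_assoc, div_self hY.ne', mul_one]
        rw [step1]
        exact le_of_eq (Finset.sum_congr rfl fun a _ => Finset.sum_comm)
  rw [E5 p, E6 p]
  linarith [main, hgibbs]

end

/-- **Theorem 3** (reduction of DisGenIB under a prior on `A`).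
Given the Markov chains `A ↔ X ↔ Z` and `Y ↔ A ↔ Z`, for every real `α ≥ 0`,
`I(X;(A,Z)) − (1+α)·I(Y;Z) ≥ (2+α)·I(X;(A,Z)) − (1+α)·(I(X;Z) + I(X;A))`;
equivalently, for any real `β`, the DisGenIB objective
`I(X;(A,Z)) + I(A;Y) − β·I(X;A) − (1+α)·I(Y;Z)` is bounded below by
`(2+α)·I(X;(A,Z)) − (1+α)·I(X;Z) + C′`, where `C′ = I(A;Y) − β·I(X;A) − (1+α)·I(X;A)`. -/
theorem disGenIB_prior_reduction
    {X Y A Z : Type*} [Fintype X] [Fintype Y] [Fintype A] [Fintype Z]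
    [Nonempty X] [Nonempty Y] [Nonempty A] [Nonempty Z]
    (p : X → Y → A → Z → ℝ)
    (hp0 : ∀ x y a z, 0 ≤ p x y a z)
    (hp1 : ∑ x, ∑ y, ∑ a, ∑ z, p x y a z = 1)
    -- Markov chain `A ↔ X ↔ Z`, i.e. `p(x,a,z)·p(x) = p(x,a)·p(x,z)`:
    (hMarkovAXZ : ∀ x a z,
      (∑ y, p x y a z) * (∑ y, ∑ a', ∑ z', p x y a' z')
        = (∑ y, ∑ z', p x y a z') * (∑ y, ∑ a', p x y a' z))
    -- Markov chain `Y ↔ A ↔ Z`, i.e. `p(a,y,z)·p(a) = p(a,y)·p(a,z)`: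
    (hMarkovYAZ : ∀ a y z,
      (∑ x, p x y a z) * (∑ x, ∑ y', ∑ z', p x y' a z')
        = (∑ x, ∑ z', p x y a z') * (∑ x, ∑ y', p x y' a z))
    (α : ℝ) (hα : 0 ≤ α) :
    (mutualInfo (fun x (az : A × Z) => ∑ y, p x y az.1 az.2)
        - (1 + α) * mutualInfo (fun y z => ∑ x, ∑ a, p x y a z)
      ≥ (2 + α) * mutualInfo (fun x (az : A × Z) => ∑ y, p x y az.1 az.2)
        - (1 + α) * (mutualInfo (fun x z => ∑ y, ∑ a, p x y a z)
                      + mutualInfo (fun x a => ∑ y, ∑ z, p x y a z)))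
    ∧ ∀ β : ℝ,
      mutualInfo (fun x (az : A × Z) => ∑ y, p x y az.1 az.2)
          + mutualInfo (fun a y => ∑ x, ∑ z, p x y a z)
          - β * mutualInfo (fun x a => ∑ y, ∑ z, p x y a z)
          - (1 + α) * mutualInfo (fun y z => ∑ x, ∑ a, p x y a z)
        ≥ (2 + α) * mutualInfo (fun x (az : A × Z) => ∑ y, p x y az.1 az.2)
          - (1 + α) * mutualInfo (fun x z => ∑ y, ∑ a, p x y a z)
          + (mutualInfo (fun a y => ∑ x, ∑ z, p x y a z)
              - β * mutualInfo (fun x a => ∑ y, ∑ z, p x y a z)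
              - (1 + α) * mutualInfo (fun x a => ∑ y, ∑ z, p x y a z)) := by
  have hA := lemA p hp0 hMarkovAXZ
  have hB := lemB p hp0 hMarkovYAZ
  have h1 : 0 ≤ (1 + α) *
      ((mutualInfo (fun x z => ∑ y, ∑ a, p x y a z)
          + mutualInfo (fun x a => ∑ y, ∑ z, p x y a z)
          - mutualInfo (fun x (az : A × Z) => ∑ y, p x y az.1 az.2))
        - mutualInfo (fun y z => ∑ x, ∑ a, p x y a z)) :=
    mul_nonneg (by linarith) (by linarith)
  have key : mutualInfo (fun x (az : A × Z) => ∑ y, p x y az.1 az.2)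
        - (1 + α) * mutualInfo (fun y z => ∑ x, ∑ a, p x y a z)
      ≥ (2 + α) * mutualInfo (fun x (az : A × Z) => ∑ y, p x y az.1 az.2)
        - (1 + α) * (mutualInfo (fun x z => ∑ y, ∑ a, p x y a z)
                      + mutualInfo (fun x a => ∑ y, ∑ z, p x y a z)) := by
    nlinarith [h1]
  exact ⟨key, fun β => by linarith [key]⟩
end

section
/- Let X and A be finitely-valued random variables with joint pmf p satisfying p(x,a) > 0 for all (x,a), and let p(a|x) = p(x,a)/p(x). Then I(X;A) ≤ Σ_{x,a} p(x,a)·log p(a|x) − Σ_{x,a} p(x)·p(a)·log p(a|x), i.e. the Contrastive Log-ratio Upper Bound (CLUB) with the true conditional distribution upper-bounds the mutual information. -/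
/-- The CLUB (Contrastive Log-ratio Upper Bound) with the true conditional
distribution `p(a|x) = p(x,a)/p(x)` upper-bounds the mutual information:
`I(X;A) ≤ Σ_{x,a} p(x,a)·log p(a|x) − Σ_{x,a} p(x)·p(a)·log p(a|x)`. -/
theorem mutualInfo_le_club
    {X A : Type*} [Fintype X] [Fintype A] [Nonempty X] [Nonempty A]
    (p : X → A → ℝ)
    (hp0 : ∀ x a, 0 < p x a)
    (hp1 : ∑ x, ∑ a, p x a = 1) :
    mutualInfo p
      ≤ (∑ x, ∑ a, p x a * Real.log (p x a / (∑ a', p x a')))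
        - ∑ x, ∑ a, (∑ a', p x a') * (∑ x', p x' a)
            * Real.log (p x a / (∑ a', p x a')) := by
  have hpX : ∀ x, 0 < ∑ a', p x a' := fun x =>
    Finset.sum_pos (fun a _ => hp0 x a) Finset.univ_nonempty
  have hpA : ∀ a, 0 < ∑ x', p x' a := fun a =>
    Finset.sum_pos (fun x _ => hp0 x a) Finset.univ_nonempty
  have hX1 : ∑ x, ∑ a', p x a' = 1 := hp1
  have hA1 : ∑ a, ∑ x', p x' a = 1 := by rw [Finset.sum_comm]; exact hp1
  -- Step 1: MI = S1 - ∑∑ p x a * log pA a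
  have hMI : mutualInfo p = (∑ x, ∑ a, p x a * Real.log (p x a / (∑ a', p x a')))
      - ∑ x, ∑ a, p x a * Real.log (∑ x', p x' a) := by
    unfold mutualInfo
    rw [← Finset.sum_sub_distrib]
    refine Finset.sum_congr rfl fun x _ => ?_
    rw [← Finset.sum_sub_distrib]
    refine Finset.sum_congr rfl fun a _ => ?_
    rw [← div_div, Real.log_div (div_pos (hp0 x a) (hpX x)).ne' (hpA a).ne']
    ring
  -- Step 2: ∑∑ p x a * log pA a = ∑∑ pX x * pA a * log pA a
  have e1 : (∑ x, ∑ a, p x a * Real.log (∑ x', p x' a))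
      = ∑ x, ∑ a, (∑ a', p x a') * (∑ x', p x' a) * Real.log (∑ x', p x' a) := by
    rw [Finset.sum_comm, Finset.sum_comm (s := Finset.univ) (t := Finset.univ)
      (f := fun x a => (∑ a', p x a') * (∑ x', p x' a) * Real.log (∑ x', p x' a))]
    refine Finset.sum_congr rfl fun a _ => ?_
    rw [← Finset.sum_mul]
    have : (∑ x, (∑ a', p x a') * (∑ x', p x' a) * Real.log (∑ x', p x' a))
        = (∑ x, ∑ a', p x a') * ((∑ x', p x' a) * Real.log (∑ x', p x' a)) := by
      rw [Finset.sum_mul]; exact Finset.sum_congr rfl fun x _ => by ring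
    rw [this, hX1, one_mul]
  -- Step 3: ∑∑ pX pA log(p/(pX pA)) ≤ 0 via log t ≤ t - 1
  have hneg : (∑ x, ∑ a, (∑ a', p x a') * (∑ x', p x' a)
        * Real.log (p x a / ((∑ a', p x a') * (∑ x', p x' a)))) ≤ 0 := by
    have hle : (∑ x, ∑ a, (∑ a', p x a') * (∑ x', p x' a)
          * Real.log (p x a / ((∑ a', p x a') * (∑ x', p x' a))))
        ≤ ∑ x, ∑ a, (p x a - (∑ a', p x a') * (∑ x', p x' a)) := by
      refine Finset.sum_le_sum fun x _ => Finset.sum_le_sum fun a _ => ?_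
      have hpos : (0:ℝ) < (∑ a', p x a') * (∑ x', p x' a) := mul_pos (hpX x) (hpA a)
      have hlog := Real.log_le_sub_one_of_pos (div_pos (hp0 x a) hpos)
      calc (∑ a', p x a') * (∑ x', p x' a)
            * Real.log (p x a / ((∑ a', p x a') * (∑ x', p x' a)))
          ≤ (∑ a', p x a') * (∑ x', p x' a)
            * (p x a / ((∑ a', p x a') * (∑ x', p x' a)) - 1) :=
            mul_le_mul_of_nonneg_left hlog hpos.le
        _ = p x a - (∑ a', p x a') * (∑ x', p x' a) := by
            rw [mul_sub, mul_one, mul_div_cancel₀ _ hpos.ne']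
    have heq : (∑ x, ∑ a, (p x a - (∑ a', p x a') * (∑ x', p x' a))) = 0 := by
      have h2 : (∑ x, ∑ a, (∑ a', p x a') * (∑ x', p x' a)) = 1 := by
        have : ∀ x : X, (∑ a, (∑ a', p x a') * (∑ x', p x' a)) = ∑ a', p x a' := by
          intro x; rw [← Finset.mul_sum, hA1, mul_one]
        rw [Finset.sum_congr rfl fun x _ => this x, hX1]
      simp only [Finset.sum_sub_distrib]
      rw [hp1, h2, sub_self]
    linarith
  -- Step 4: split the log in hneg
  have hsplit : (∑ x, ∑ a, (∑ a', p x a') * (∑ x', p x' a)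
        * Real.log (p x a / ((∑ a', p x a') * (∑ x', p x' a))))
      = (∑ x, ∑ a, (∑ a', p x a') * (∑ x', p x' a) * Real.log (p x a / (∑ a', p x a')))
        - ∑ x, ∑ a, (∑ a', p x a') * (∑ x', p x' a) * Real.log (∑ x', p x' a) := by
    rw [← Finset.sum_sub_distrib]
    refine Finset.sum_congr rfl fun x _ => ?_
    rw [← Finset.sum_sub_distrib]
    refine Finset.sum_congr rfl fun a _ => ?_
    rw [← div_div, Real.log_div (div_pos (hp0 x a) (hpX x)).ne' (hpA a).ne']
    ring
  rw [hMI, e1]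
  linarith [hneg, hsplit.symm.le, hsplit.le]
end

section
/- Let X, Y, Z be finitely-valued random variables with joint pmf p such that (Y, X, Z) forms a Markov chain Y ↔ X ↔ Z and p(x) > 0 for all x, and let α ≥ 0 be real. Let q(·|y,z) be, for each pair (y,z), a pmf on the value set of X with q(x|y,z) > 0 whenever p(x,y,z) > 0, and let r be a pmf on the value set of Z with r(z) > 0 whenever p(z) > 0. Then I(X;(Y,Z)) − (1+α)·I(Y;Z) ≥ (2+α)·( Σ_{x,y,z} p(x,y,z)·log q(x|y,z) + H(X) ) − (1+α)·Σ_x p(x)·D( p(·|x) ‖ r ) − (1+α)·I(X;Y), where p(·|x) is the conditional pmf of Z given X = x. -/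
private lemma gibbs_pt {a b : ℝ} (ha : 0 ≤ a) (hb : 0 ≤ b) (hab : 0 < a → 0 < b) :
    a - b ≤ a * Real.log (a / b) := by
  rcases ha.eq_or_lt with h | h
  · rw [← h]; simpa using hb
  · have hb' := hab h
    have h1 : Real.log (b / a) ≤ b / a - 1 := Real.log_le_sub_one_of_pos (div_pos hb' h)
    have h2 : Real.log (a / b) = - Real.log (b / a) := by
      rw [← Real.log_inv, inv_div]
    have h3 : a * Real.log (b / a) ≤ a * (b / a - 1) := mul_le_mul_of_nonneg_left h1 h.le
    have h4 : a * (b / a - 1) = b - a := by field_simp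
    rw [h2]; nlinarith

private lemma gibbs_pt' {a b : ℝ} (ha : 0 ≤ a) (hb : 0 ≤ b) (hab : 0 < a → 0 < b) :
    a - b ≤ a * (Real.log a - Real.log b) := by
  rcases ha.eq_or_lt with h | h
  · rw [← h]; simpa using hb
  · have := gibbs_pt ha hb hab
    rwa [Real.log_div h.ne' (hab h).ne'] at this

/-- Eqs. 12–14 of the paper combined (proof of Theorem 5): under the Markov chain
`Y ↔ X ↔ Z`, the DisGenIB objective with `A = Y` is lower-bounded by the
CVAE-type objective:
`I(X;(Y,Z)) − (1+α)·I(Y;Z) ≥ (2+α)·(Σ p·log q(x|y,z) + H(X)) − (1+α)·Σ_x p(x)·D(p(·|x)‖r) − (1+α)·I(X;Y)`. -/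
theorem disGenIB_ge_cvae_objective
    {X Y Z : Type*} [Fintype X] [Fintype Y] [Fintype Z]
    [Nonempty X] [Nonempty Y] [Nonempty Z]
    (p : X → Y → Z → ℝ)
    (hp0 : ∀ x y z, 0 ≤ p x y z)
    (hp1 : ∑ x, ∑ y, ∑ z, p x y z = 1)
    (hMarkov : ∀ x y z,
      p x y z * (∑ y', ∑ z', p x y' z') = (∑ z', p x y z') * (∑ y', p x y' z))
    (hpx : ∀ x, 0 < ∑ y, ∑ z, p x y z)
    (α : ℝ) (hα : 0 ≤ α)
    (q : Y → Z → X → ℝ)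
    (hq0 : ∀ y z x, 0 ≤ q y z x)
    (hq1 : ∀ y z, ∑ x, q y z x = 1)
    (hqpos : ∀ x y z, 0 < p x y z → 0 < q y z x)
    (r : Z → ℝ)
    (hr0 : ∀ z, 0 ≤ r z)
    (hr1 : ∑ z, r z = 1)
    (hrpos : ∀ z, 0 < ∑ x, ∑ y, p x y z → 0 < r z) :
    mutualInfo (fun x (yz : Y × Z) => p x yz.1 yz.2)
        - (1 + α) * mutualInfo (fun y z => ∑ x, p x y z)
      ≥ (2 + α) * ((∑ x, ∑ y, ∑ z, p x y z * Real.log (q y z x))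
            + (- ∑ x, (∑ y, ∑ z, p x y z) * Real.log (∑ y, ∑ z, p x y z)))
        - (1 + α) * ∑ x, (∑ y, ∑ z, p x y z) *
            (∑ z, ((∑ y, p x y z) / (∑ y, ∑ z', p x y z'))
              * Real.log (((∑ y, p x y z) / (∑ y, ∑ z', p x y z')) / r z))
        - (1 + α) * mutualInfo (fun x y => ∑ z, p x y z) := by
  classical
  -- pointwise positivity of marginals
  have hpxy : ∀ x y z, 0 < p x y z → 0 < ∑ z', p x y z' := fun x y z h =>
    Finset.sum_pos' (fun z' _ => hp0 x y z') ⟨z, Finset.mem_univ z, h⟩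
  have hpxz : ∀ x y z, 0 < p x y z → 0 < ∑ y', p x y' z := fun x y z h =>
    Finset.sum_pos' (fun y' _ => hp0 x y' z) ⟨y, Finset.mem_univ y, h⟩
  have hpyz : ∀ x y z, 0 < p x y z → 0 < ∑ x', p x' y z := fun x y z h =>
    Finset.sum_pos' (fun x' _ => hp0 x' y z) ⟨x, Finset.mem_univ x, h⟩
  have hpzE : ∀ x y z, 0 < p x y z → 0 < ∑ x', ∑ y', p x' y' z := fun x y z h =>
    Finset.sum_pos' (fun x' _ => Finset.sum_nonneg fun y' _ => hp0 x' y' z)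
      ⟨x, Finset.mem_univ x, hpxz x y z h⟩
  have hpzB : ∀ x y z, 0 < p x y z → 0 < ∑ y', ∑ x', p x' y' z := fun x y z h =>
    Finset.sum_pos' (fun y' _ => Finset.sum_nonneg fun x' _ => hp0 x' y' z)
      ⟨y, Finset.mem_univ y, hpyz x y z h⟩
  have hpyB : ∀ x y z, 0 < p x y z → 0 < ∑ z', ∑ x', p x' y z' := fun x y z h =>
    Finset.sum_pos' (fun z' _ => Finset.sum_nonneg fun x' _ => hp0 x' y z')
      ⟨z, Finset.mem_univ z, hpyz x y z h⟩
  have hpyC : ∀ x y z, 0 < p x y z → 0 < ∑ x', ∑ z', p x' y z' := fun x y z h =>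
    Finset.sum_pos' (fun x' _ => Finset.sum_nonneg fun z' _ => hp0 x' y z')
      ⟨x, Finset.mem_univ x, hpxy x y z h⟩
  have hpxz0 : ∀ x z, 0 ≤ ∑ y, p x y z := fun x z => Finset.sum_nonneg fun y _ => hp0 x y z
  have hpzE0 : ∀ z, 0 ≤ ∑ x, ∑ y, p x y z := fun z =>
    Finset.sum_nonneg fun x _ => hpxz0 x z
  have hpxzle : ∀ x z, (∑ y, p x y z) ≤ ∑ x', ∑ y, p x' y z := fun x z =>
    Finset.single_le_sum (f := fun x' => ∑ y, p x' y z) (fun x' _ => hpxz0 x' z)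
      (Finset.mem_univ x)
  simp only [mutualInfo, Fintype.sum_prod_type]
  -- sum permutation helpers
  have comm_yzx : ∀ (f : X → Y → Z → ℝ),
      ∑ y, ∑ z, ∑ x, f x y z = ∑ x, ∑ y, ∑ z, f x y z := by
    intro f
    calc ∑ y, ∑ z, ∑ x, f x y z = ∑ y, ∑ x, ∑ z, f x y z :=
          Finset.sum_congr rfl fun y _ => Finset.sum_comm
      _ = ∑ x, ∑ y, ∑ z, f x y z := Finset.sum_comm
  have comm_zxy : ∀ (f : X → Y → Z → ℝ),
      ∑ z, ∑ x, ∑ y, f x y z = ∑ x, ∑ y, ∑ z, f x y z := by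
    intro f
    calc ∑ z, ∑ x, ∑ y, f x y z = ∑ x, ∑ z, ∑ y, f x y z := Finset.sum_comm
      _ = ∑ x, ∑ y, ∑ z, f x y z :=
          Finset.sum_congr rfl fun x _ => Finset.sum_comm
  -- B as a triple sum
  have hB : (∑ y, ∑ z, (∑ x, p x y z) * Real.log ((∑ x, p x y z) /
        ((∑ z', ∑ x, p x y z') * ∑ y', ∑ x, p x y' z)))
      = ∑ x, ∑ y, ∑ z, p x y z * Real.log ((∑ x', p x' y z) /
        ((∑ z', ∑ x', p x' y z') * ∑ y', ∑ x', p x' y' z)) := by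
    refine Eq.trans ?_ (comm_yzx _)
    exact Finset.sum_congr rfl fun y _ => Finset.sum_congr rfl fun z _ => by rw [Finset.sum_mul]
  -- C as a triple sum
  have hC : (∑ x, ∑ y, (∑ z, p x y z) * Real.log ((∑ z, p x y z) /
        ((∑ y', ∑ z, p x y' z) * ∑ x', ∑ z, p x' y z)))
      = ∑ x, ∑ y, ∑ z, p x y z * Real.log ((∑ z', p x y z') /
        ((∑ y', ∑ z', p x y' z') * ∑ x', ∑ z', p x' y z')) :=
    Finset.sum_congr rfl fun x _ => Finset.sum_congr rfl fun y _ => by rw [Finset.sum_mul]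
  -- entropy term as a triple sum
  have hH : (∑ x, (∑ y, ∑ z, p x y z) * Real.log (∑ y, ∑ z, p x y z))
      = ∑ x, ∑ y, ∑ z, p x y z * Real.log (∑ y', ∑ z', p x y' z') :=
    Finset.sum_congr rfl fun x _ => by
      rw [Finset.sum_mul]
      exact Finset.sum_congr rfl fun y _ => by rw [Finset.sum_mul]
  -- KL term as a triple sum
  have hK : (∑ x, (∑ y, ∑ z, p x y z) *
        ∑ z, ((∑ y, p x y z) / (∑ y, ∑ z', p x y z')) *
          Real.log (((∑ y, p x y z) / (∑ y, ∑ z', p x y z')) / r z))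
      = ∑ x, ∑ y, ∑ z, p x y z * (Real.log (∑ y', p x y' z)
          - Real.log (∑ y', ∑ z', p x y' z') - Real.log (r z)) := by
    refine Finset.sum_congr rfl fun x _ => ?_
    refine Eq.trans ?_ Finset.sum_comm
    rw [Finset.mul_sum]
    refine Finset.sum_congr rfl fun z _ => ?_
    rw [← Finset.sum_mul]
    rcases (hpxz0 x z).eq_or_lt with h | h
    · rw [← h]; simp
    · have hx := hpx x
      have hr' : 0 < r z := hrpos z (lt_of_lt_of_le h (hpxzle x z))
      rw [div_div, Real.log_div h.ne' (mul_pos hx hr').ne', Real.log_mul hx.ne' hr'.ne']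
      have hcan : (∑ y, ∑ z, p x y z) * ((∑ y, p x y z) / (∑ y, ∑ z, p x y z))
          = ∑ y, p x y z := by field_simp
      rw [← mul_assoc, hcan]
      ring
  -- Markov identity: I(X;YZ) + I(Y;Z) = I(X;Y) + I(X;Z)
  have h1 : (∑ x, ∑ y, ∑ z, p x y z * Real.log (p x y z /
          ((∑ y', ∑ z', p x y' z') * ∑ x', p x' y z)))
      + (∑ x, ∑ y, ∑ z, p x y z * Real.log ((∑ x', p x' y z) /
          ((∑ z', ∑ x', p x' y z') * ∑ y', ∑ x', p x' y' z)))
      = (∑ x, ∑ y, ∑ z, p x y z * Real.log ((∑ z', p x y z') /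
          ((∑ y', ∑ z', p x y' z') * ∑ x', ∑ z', p x' y z')))
      + (∑ x, ∑ y, ∑ z, p x y z * Real.log ((∑ y', p x y' z) /
          ((∑ y', ∑ z', p x y' z') * ∑ x', ∑ y', p x' y' z))) := by
    simp only [← Finset.sum_add_distrib]
    refine Finset.sum_congr rfl fun x _ => Finset.sum_congr rfl fun y _ =>
      Finset.sum_congr rfl fun z _ => ?_
    rcases (hp0 x y z).eq_or_lt with h | h
    · rw [← h]; simp
    · have h1' := hpxy x y z h
      have h2' := hpxz x y z h
      have h3' := hpyz x y z h
      have h4' := hpx x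
      have h5' := hpzE x y z h
      have h8' := hpyC x y z h
      have eY : (∑ z', ∑ x', p x' y z') = ∑ x', ∑ z', p x' y z' := Finset.sum_comm
      have eZ : (∑ y', ∑ x', p x' y' z) = ∑ x', ∑ y', p x' y' z := Finset.sum_comm
      rw [eY, eZ]
      have hm := congrArg Real.log (hMarkov x y z)
      rw [Real.log_mul h.ne' h4'.ne', Real.log_mul h1'.ne' h2'.ne'] at hm
      rw [Real.log_div h.ne' (mul_pos h4' h3').ne', Real.log_mul h4'.ne' h3'.ne',
          Real.log_div h3'.ne' (mul_pos h8' h5').ne', Real.log_mul h8'.ne' h5'.ne',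
          Real.log_div h1'.ne' (mul_pos h4' h8').ne', Real.log_mul h4'.ne' h8'.ne',
          Real.log_div h2'.ne' (mul_pos h4' h5').ne', Real.log_mul h4'.ne' h5'.ne']
      have hlp : Real.log (p x y z) = Real.log (∑ z', p x y z')
          + Real.log (∑ y', p x y' z) - Real.log (∑ y', ∑ z', p x y' z') := by linarith
      rw [hlp]; ring
  -- total mass of the q-mixture
  have hS2 : ∑ x, ∑ y, ∑ z, ((∑ x', p x' y z) * q y z x) = 1 := by
    rw [← comm_yzx (fun x y z => (∑ x', p x' y z) * q y z x)]
    have e : ∀ y z, ∑ x, (∑ x', p x' y z) * q y z x = ∑ x', p x' y z := by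
      intro y z; rw [← Finset.mul_sum, hq1, mul_one]
    simp only [e]
    exact (comm_yzx p).trans hp1
  -- Gibbs inequality: Σ p log q + H(X) ≤ I(X;YZ)
  have h2 : (∑ x, ∑ y, ∑ z, p x y z * Real.log (q y z x))
      - (∑ x, ∑ y, ∑ z, p x y z * Real.log (∑ y', ∑ z', p x y' z'))
      ≤ ∑ x, ∑ y, ∑ z, p x y z * Real.log (p x y z /
          ((∑ y', ∑ z', p x y' z') * ∑ x', p x' y z)) := by
    have key : ∑ x, ∑ y, ∑ z, (p x y z - (∑ x', p x' y z) * q y z x)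
        ≤ ∑ x, ∑ y, ∑ z, (p x y z * Real.log (p x y z /
              ((∑ y', ∑ z', p x y' z') * ∑ x', p x' y z))
            - p x y z * Real.log (q y z x)
            + p x y z * Real.log (∑ y', ∑ z', p x y' z')) := by
      refine Finset.sum_le_sum fun x _ => Finset.sum_le_sum fun y _ =>
        Finset.sum_le_sum fun z _ => ?_
      rcases (hp0 x y z).eq_or_lt with h | h
      · have hnn : 0 ≤ (∑ x', p x' y z) * q y z x :=
          mul_nonneg (Finset.sum_nonneg fun _ _ => hp0 _ _ _) (hq0 y z x)
        rw [← h]; simp; linarith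
      · have h3' := hpyz x y z h
        have h4' := hpx x
        have hq' := hqpos x y z h
        have hb : 0 < (∑ x', p x' y z) * q y z x := mul_pos h3' hq'
        have hg := gibbs_pt h.le hb.le fun _ => hb
        rw [Real.log_div h.ne' hb.ne', Real.log_mul h3'.ne' hq'.ne'] at hg
        rw [Real.log_div h.ne' (mul_pos h4' h3').ne', Real.log_mul h4'.ne' h3'.ne']
        nlinarith [hg]
    have e1 : ∑ x, ∑ y, ∑ z, (p x y z - (∑ x', p x' y z) * q y z x) = 0 := by
      simp only [Finset.sum_sub_distrib]
      rw [hp1, hS2]; norm_num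
    have e2 : ∑ x, ∑ y, ∑ z, (p x y z * Real.log (p x y z /
              ((∑ y', ∑ z', p x y' z') * ∑ x', p x' y z))
            - p x y z * Real.log (q y z x)
            + p x y z * Real.log (∑ y', ∑ z', p x y' z'))
        = (∑ x, ∑ y, ∑ z, p x y z * Real.log (p x y z /
              ((∑ y', ∑ z', p x y' z') * ∑ x', p x' y z)))
          - (∑ x, ∑ y, ∑ z, p x y z * Real.log (q y z x))
          + (∑ x, ∑ y, ∑ z, p x y z * Real.log (∑ y', ∑ z', p x y' z')) := by
      simp only [Finset.sum_add_distrib, Finset.sum_sub_distrib]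
    rw [e1, e2] at key
    linarith
  -- Σ_x p(x) D(p(z|x) ‖ r) ≥ I(X;Z)
  have h3 : (∑ x, ∑ y, ∑ z, p x y z * Real.log ((∑ y', p x y' z) /
          ((∑ y', ∑ z', p x y' z') * ∑ x', ∑ y', p x' y' z)))
      ≤ ∑ x, ∑ y, ∑ z, p x y z * (Real.log (∑ y', p x y' z)
          - Real.log (∑ y', ∑ z', p x y' z') - Real.log (r z)) := by
    have eTE : (∑ x, ∑ y, ∑ z, p x y z * Real.log ((∑ y', p x y' z) /
            ((∑ y', ∑ z', p x y' z') * ∑ x', ∑ y', p x' y' z)))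
        = ∑ x, ∑ y, ∑ z, p x y z * (Real.log (∑ y', p x y' z)
            - Real.log (∑ y', ∑ z', p x y' z') - Real.log (∑ x', ∑ y', p x' y' z)) := by
      refine Finset.sum_congr rfl fun x _ => Finset.sum_congr rfl fun y _ =>
        Finset.sum_congr rfl fun z _ => ?_
      rcases (hp0 x y z).eq_or_lt with h | h
      · rw [← h]; simp
      · have h2' := hpxz x y z h
        have h4' := hpx x
        have h5' := hpzE x y z h
        rw [Real.log_div h2'.ne' (mul_pos h4' h5').ne', Real.log_mul h4'.ne' h5'.ne']
        ring
    rw [eTE, ← sub_nonneg]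
    have ediff : (∑ x, ∑ y, ∑ z, p x y z * (Real.log (∑ y', p x y' z)
            - Real.log (∑ y', ∑ z', p x y' z') - Real.log (r z)))
        - (∑ x, ∑ y, ∑ z, p x y z * (Real.log (∑ y', p x y' z)
            - Real.log (∑ y', ∑ z', p x y' z') - Real.log (∑ x', ∑ y', p x' y' z)))
        = ∑ x, ∑ y, ∑ z, p x y z *
            (Real.log (∑ x', ∑ y', p x' y' z) - Real.log (r z)) := by
      simp only [← Finset.sum_sub_distrib]
      exact Finset.sum_congr rfl fun x _ => Finset.sum_congr rfl fun y _ =>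
        Finset.sum_congr rfl fun z _ => by ring
    rw [ediff, ← comm_zxy (fun x y z => p x y z *
        (Real.log (∑ x', ∑ y', p x' y' z) - Real.log (r z)))]
    have emul : ∀ z, (∑ x, ∑ y, p x y z *
          (Real.log (∑ x', ∑ y', p x' y' z) - Real.log (r z)))
        = (∑ x, ∑ y, p x y z) * (Real.log (∑ x', ∑ y', p x' y' z) - Real.log (r z)) := by
      intro z
      rw [Finset.sum_mul]
      exact Finset.sum_congr rfl fun x _ => by rw [Finset.sum_mul]
    simp only [emul]
    have lower : ∑ z, ((∑ x, ∑ y, p x y z) - r z)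
        ≤ ∑ z, (∑ x, ∑ y, p x y z) * (Real.log (∑ x', ∑ y', p x' y' z) - Real.log (r z)) :=
      Finset.sum_le_sum fun z _ => gibbs_pt' (hpzE0 z) (hr0 z) (hrpos z)
    have etot : ∑ z, ((∑ x, ∑ y, p x y z) - r z) = 0 := by
      rw [Finset.sum_sub_distrib, hr1, (comm_zxy p).trans hp1]; norm_num
    linarith
  -- assemble
  rw [hB, hC, hK, hH]
  have c1 := mul_le_mul_of_nonneg_left h2 (show (0:ℝ) ≤ 2 + α by linarith)
  have c2 := mul_le_mul_of_nonneg_left h3 (show (0:ℝ) ≤ 1 + α by linarith)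
  have c3 := congrArg (fun t => (1 + α) * t) h1
  nlinarith [c1, c2, c3]
end

section
/- Let X, A, Z be finitely-valued random variables with joint pmf p such that p(x) > 0 for all x, and let α′ ≥ 0 be real. Let q(·|a,z) be, for each pair (a,z), a pmf on the value set of X with q(x|a,z) > 0 whenever p(x,a,z) > 0, and let r be a pmf on the value set of Z with r(z) > 0 whenever p(z) > 0. Then I(X;(A,Z)) − α′·I(X;Z) ≥ Σ_{x,a,z} p(x,a,z)·log q(x|a,z) + H(X) − α′·Σ_x p(x)·D( p(·|x) ‖ r ), where p(·|x) is the conditional pmf of Z given X = x. -/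
/-- Gibbs' inequality. -/
lemma gibbs_nonneg {ι : Type*} [Fintype ι] (a b : ι → ℝ) (ha : ∀ i, 0 ≤ a i)
    (hb : ∀ i, 0 ≤ b i) (hab : ∀ i, 0 < a i → 0 < b i)
    (hsum : ∑ i, b i ≤ ∑ i, a i) :
    0 ≤ ∑ i, a i * Real.log (a i / b i) := by
  have h : ∀ i ∈ Finset.univ, a i - b i ≤ a i * Real.log (a i / b i) := by
    intro i _
    rcases (ha i).eq_or_lt with h0 | h0
    · have := hb i
      simp [← h0]
      linarith
    · have hbpos := hab i h0
      have h1 : Real.log (b i / a i) ≤ b i / a i - 1 :=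
        Real.log_le_sub_one_of_pos (by positivity)
      have hlog : Real.log (a i / b i) = - Real.log (b i / a i) := by
        rw [← Real.log_inv]
        congr 1
        field_simp
      rw [hlog]
      have h2 := mul_le_mul_of_nonneg_left h1 h0.le
      have hba : a i * (b i / a i) = b i := by field_simp
      nlinarith
  have h2 := Finset.sum_le_sum h
  rw [Finset.sum_sub_distrib] at h2
  linarith

/-- Basis of Theorem 6 of the paper: the reduced DisGenIB objective
`I(X;(A,Z)) − α′·I(X;Z)` is lower-bounded by the attribute-based VAE objective
`Σ_{x,a,z} p(x,a,z)·log q(x|a,z) + H(X) − α′·Σ_x p(x)·D(p(·|x)‖r)`. -/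
theorem disGenIB_prior_ge_avae_objective
    {X A Z : Type*} [Fintype X] [Fintype A] [Fintype Z]
    [Nonempty X] [Nonempty A] [Nonempty Z]
    (p : X → A → Z → ℝ)
    (hp0 : ∀ x a z, 0 ≤ p x a z)
    (hp1 : ∑ x, ∑ a, ∑ z, p x a z = 1)
    (hpx : ∀ x, 0 < ∑ a, ∑ z, p x a z)
    (α' : ℝ) (hα' : 0 ≤ α')
    (q : A → Z → X → ℝ)
    (hq0 : ∀ a z x, 0 ≤ q a z x)
    (hq1 : ∀ a z, ∑ x, q a z x = 1)
    (hqpos : ∀ x a z, 0 < p x a z → 0 < q a z x)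
    (r : Z → ℝ)
    (hr0 : ∀ z, 0 ≤ r z)
    (hr1 : ∑ z, r z = 1)
    (hrpos : ∀ z, 0 < ∑ x, ∑ a, p x a z → 0 < r z) :
    mutualInfo (fun x (az : A × Z) => p x az.1 az.2)
        - α' * mutualInfo (fun x z => ∑ a, p x a z)
      ≥ (∑ x, ∑ a, ∑ z, p x a z * Real.log (q a z x))
        + (- ∑ x, (∑ a, ∑ z, p x a z) * Real.log (∑ a, ∑ z, p x a z))
        - α' * ∑ x, (∑ a, ∑ z, p x a z) *
            (∑ z, ((∑ a, p x a z) / (∑ a, ∑ z', p x a z'))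
              * Real.log (((∑ a, p x a z) / (∑ a, ∑ z', p x a z')) / r z)) := by
  classical
  -- basic positivity facts
  have hpAZ_le : ∀ x a z, p x a z ≤ ∑ x', p x' a z := fun x a z =>
    Finset.single_le_sum (fun x' _ => hp0 x' a z) (Finset.mem_univ x)
  have hpXZ0 : ∀ x z, (0:ℝ) ≤ ∑ a, p x a z := fun x z =>
    Finset.sum_nonneg fun a _ => hp0 x a z
  have hpXZ_le : ∀ x z, (∑ a, p x a z) ≤ ∑ x', ∑ a, p x' a z := fun x z =>
    Finset.single_le_sum (fun x' _ => hpXZ0 x' z) (Finset.mem_univ x)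
  -- the marginal on X written with swapped inner sums
  have hswap : ∀ x, (∑ z, ∑ a, p x a z) = ∑ a, ∑ z, p x a z := fun x => Finset.sum_comm
  -- E1 : expand I(X;(A,Z))
  have hMI1 : mutualInfo (fun x (az : A × Z) => p x az.1 az.2)
      = ∑ x, ∑ a, ∑ z, p x a z *
          Real.log (p x a z / ((∑ a', ∑ z', p x a' z') * (∑ x', p x' a z))) := by
    simp only [mutualInfo, Fintype.sum_prod_type]
  have hE1 : ∀ x, (∑ a, ∑ z, p x a z *
          Real.log (p x a z / ((∑ a', ∑ z', p x a' z') * (∑ x', p x' a z))))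
      = (∑ a, ∑ z, p x a z * Real.log (p x a z / (q a z x * ∑ x', p x' a z)))
        + (∑ a, ∑ z, p x a z * Real.log (q a z x))
        - (∑ a, ∑ z, p x a z) * Real.log (∑ a, ∑ z, p x a z) := by
    intro x
    have hH : (∑ a, ∑ z, p x a z) * Real.log (∑ a, ∑ z, p x a z)
        = ∑ a, ∑ z, p x a z * Real.log (∑ a', ∑ z', p x a' z') := by
      rw [Finset.sum_mul]
      exact Finset.sum_congr rfl fun a _ => Finset.sum_mul ..
    rw [hH, ← Finset.sum_add_distrib, ← Finset.sum_sub_distrib]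
    refine Finset.sum_congr rfl fun a _ => ?_
    rw [← Finset.sum_add_distrib, ← Finset.sum_sub_distrib]
    refine Finset.sum_congr rfl fun z _ => ?_
    rcases (hp0 x a z).eq_or_lt with h0 | h0
    · simp [← h0]
    · have hq := hqpos x a z h0
      have hpAZ : (0:ℝ) < ∑ x', p x' a z := lt_of_lt_of_le h0 (hpAZ_le x a z)
      have hpX : (0:ℝ) < ∑ a', ∑ z', p x a' z' := hpx x
      rw [Real.log_div h0.ne' (mul_pos hpX hpAZ).ne',
          Real.log_div h0.ne' (mul_pos hq hpAZ).ne',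
          Real.log_mul hpX.ne' hpAZ.ne', Real.log_mul hq.ne' hpAZ.ne']
      ring
  -- E2 : rewrite the conditional KL term
  have hE2 : ∀ x, (∑ a, ∑ z, p x a z) *
        (∑ z, ((∑ a, p x a z) / (∑ a, ∑ z', p x a z'))
          * Real.log (((∑ a, p x a z) / (∑ a, ∑ z', p x a z')) / r z))
      = ∑ z, (∑ a, p x a z) *
          Real.log ((∑ a, p x a z) / ((∑ a, ∑ z', p x a z') * r z)) := by
    intro x
    rw [Finset.mul_sum]
    refine Finset.sum_congr rfl fun z _ => ?_
    have hpX : (0:ℝ) < ∑ a, ∑ z', p x a z' := hpx x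
    rcases (hpXZ0 x z).eq_or_lt with h0 | h0
    · simp [← h0]
    · rw [div_div, ← mul_assoc]
      have h1 : (∑ a, ∑ z', p x a z') * ((∑ a, p x a z) / (∑ a, ∑ z', p x a z'))
          = ∑ a, p x a z := by field_simp
      rw [h1]
  -- E3 : KL-term vs I(X;Z), termwise
  have hE3 : ∀ x z, (∑ a, p x a z) *
        Real.log ((∑ a, p x a z) / ((∑ a, ∑ z', p x a z') * r z))
      = (∑ a, p x a z) * Real.log ((∑ a, p x a z) /
            ((∑ z', ∑ a, p x a z') * (∑ x', ∑ a, p x' a z)))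
        + (∑ a, p x a z) * Real.log ((∑ x', ∑ a, p x' a z) / r z) := by
    intro x z
    rcases (hpXZ0 x z).eq_or_lt with h0 | h0
    · simp [← h0]
    · have hpZ : (0:ℝ) < ∑ x', ∑ a, p x' a z := lt_of_lt_of_le h0 (hpXZ_le x z)
      have hr : (0:ℝ) < r z := hrpos z hpZ
      have hpX : (0:ℝ) < ∑ z', ∑ a, p x a z' := by rw [hswap x]; exact hpx x
      have hpX' : (0:ℝ) < ∑ a, ∑ z', p x a z' := hpx x
      rw [Real.log_div h0.ne' (mul_pos hpX' hr).ne',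
          Real.log_div h0.ne' (mul_pos hpX hpZ).ne',
          Real.log_div hpZ.ne' hr.ne',
          Real.log_mul hpX'.ne' hr.ne',
          Real.log_mul hpX.ne' hpZ.ne']
      have : Real.log (∑ a, ∑ z', p x a z') = Real.log (∑ z', ∑ a, p x a z') := by
        rw [hswap x]
      rw [this]
      ring
  -- nonnegativity of the first divergence
  have hD1 : 0 ≤ ∑ x, ∑ a, ∑ z, p x a z *
      Real.log (p x a z / (q a z x * ∑ x', p x' a z)) := by
    have := gibbs_nonneg (ι := X × A × Z)
      (fun i => p i.1 i.2.1 i.2.2)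
      (fun i => q i.2.1 i.2.2 i.1 * ∑ x', p x' i.2.1 i.2.2)
      (fun i => hp0 _ _ _)
      (fun i => mul_nonneg (hq0 _ _ _) (Finset.sum_nonneg fun x' _ => hp0 _ _ _))
      (fun i hi => mul_pos (hqpos _ _ _ hi) (lt_of_lt_of_le hi (hpAZ_le _ _ _)))
      ?_
    · simpa only [Fintype.sum_prod_type] using this
    · simp only [Fintype.sum_prod_type]
      have hb : (∑ x, ∑ a, ∑ z, q a z x * ∑ x', p x' a z)
          = ∑ a, ∑ z, ∑ x', p x' a z := by
        rw [Finset.sum_comm]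
        refine Finset.sum_congr rfl fun a _ => ?_
        rw [Finset.sum_comm]
        refine Finset.sum_congr rfl fun z _ => ?_
        rw [← Finset.sum_mul, hq1, one_mul]
      rw [hb, hp1]
      have h2 : (∑ a, ∑ z, ∑ x', p x' a z) = ∑ x', ∑ a, ∑ z, p x' a z :=
        calc (∑ a, ∑ z, ∑ x', p x' a z) = ∑ a, ∑ x', ∑ z, p x' a z :=
              Finset.sum_congr rfl fun a _ => Finset.sum_comm
          _ = ∑ x', ∑ a, ∑ z, p x' a z := Finset.sum_comm
      rw [h2, hp1]
  -- nonnegativity of the second divergence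
  have hD2 : 0 ≤ ∑ z, (∑ x, ∑ a, p x a z) *
      Real.log ((∑ x, ∑ a, p x a z) / r z) := by
    refine gibbs_nonneg _ _ (fun z => Finset.sum_nonneg fun x _ => hpXZ0 x z) hr0
      (fun z hz => hrpos z hz) ?_
    rw [hr1]
    have h2 : (∑ z, ∑ x, ∑ a, p x a z) = ∑ x, ∑ a, ∑ z, p x a z :=
      calc (∑ z, ∑ x, ∑ a, p x a z) = ∑ x, ∑ z, ∑ a, p x a z := Finset.sum_comm
        _ = ∑ x, ∑ a, ∑ z, p x a z := Finset.sum_congr rfl fun x _ => Finset.sum_comm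
    rw [h2, hp1]
  -- assemble
  have hMI2 : mutualInfo (fun x z => ∑ a, p x a z)
      = ∑ x, ∑ z, (∑ a, p x a z) * Real.log ((∑ a, p x a z) /
            ((∑ z', ∑ a, p x a z') * (∑ x', ∑ a, p x' a z))) := rfl
  have hsumE1 : mutualInfo (fun x (az : A × Z) => p x az.1 az.2)
      = (∑ x, ∑ a, ∑ z, p x a z * Real.log (p x a z / (q a z x * ∑ x', p x' a z)))
        + (∑ x, ∑ a, ∑ z, p x a z * Real.log (q a z x))
        - ∑ x, (∑ a, ∑ z, p x a z) * Real.log (∑ a, ∑ z, p x a z) := by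
    rw [hMI1]
    rw [Finset.sum_congr rfl fun x _ => hE1 x]
    rw [Finset.sum_sub_distrib, Finset.sum_add_distrib]
  have hsumE23 : (∑ x, (∑ a, ∑ z, p x a z) *
        (∑ z, ((∑ a, p x a z) / (∑ a, ∑ z', p x a z'))
          * Real.log (((∑ a, p x a z) / (∑ a, ∑ z', p x a z')) / r z)))
      = mutualInfo (fun x z => ∑ a, p x a z)
        + ∑ z, (∑ x, ∑ a, p x a z) * Real.log ((∑ x, ∑ a, p x a z) / r z) := by
    rw [Finset.sum_congr rfl fun x _ => hE2 x]
    rw [Finset.sum_congr rfl fun x _ => Finset.sum_congr rfl fun z _ => hE3 x z]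
    rw [hMI2]
    have h1 : (∑ x, ∑ z, ((∑ a, p x a z) * Real.log ((∑ a, p x a z) /
            ((∑ z', ∑ a, p x a z') * (∑ x', ∑ a, p x' a z)))
        + (∑ a, p x a z) * Real.log ((∑ x', ∑ a, p x' a z) / r z)))
        = (∑ x, ∑ z, (∑ a, p x a z) * Real.log ((∑ a, p x a z) /
            ((∑ z', ∑ a, p x a z') * (∑ x', ∑ a, p x' a z))))
          + ∑ x, ∑ z, (∑ a, p x a z) * Real.log ((∑ x', ∑ a, p x' a z) / r z) := by
      rw [← Finset.sum_add_distrib]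
      exact Finset.sum_congr rfl fun x _ => Finset.sum_add_distrib
    rw [h1]
    congr 1
    rw [Finset.sum_comm]
    refine Finset.sum_congr rfl fun z _ => ?_
    rw [← Finset.sum_mul]
  have hαD2 : 0 ≤ α' * ∑ z, (∑ x, ∑ a, p x a z) *
      Real.log ((∑ x, ∑ a, p x a z) / r z) := mul_nonneg hα' hD2
  rw [ge_iff_le, hsumE1]
  have hK := hsumE23
  nlinarith [mul_le_mul_of_nonneg_left (le_of_eq hK) hα', hαD2, hD1]
end

section
/- Let X and A be finitely-valued random variables with joint pmf p satisfying p(x,a) > 0 for all (x,a), and let p(a|x) = p(x,a)/p(x). Then Σ_{x,a} p(x)·p(a)·log p(a|x) ≤ Σ_a p(a)·log p(a). -/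
/-- Jensen-type inequality underlying the CLUB upper bound on mutual information:
for a strictly positive joint pmf `p` on `X × A`, with `p(a|x) = p(x,a)/p(x)`,
`Σ_{x,a} p(x)·p(a)·log p(a|x) ≤ Σ_a p(a)·log p(a)`. -/
theorem club_jensen_step
    {X A : Type*} [Fintype X] [Fintype A] [Nonempty X] [Nonempty A]
    (p : X → A → ℝ)
    (hp0 : ∀ x a, 0 < p x a)
    (hp1 : ∑ x, ∑ a, p x a = 1) :
    ∑ x, ∑ a, (∑ a', p x a') * (∑ x', p x' a) * Real.log (p x a / (∑ a', p x a'))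
      ≤ ∑ a, (∑ x', p x' a) * Real.log (∑ x', p x' a) := by
  have hX : ∀ x : X, 0 < ∑ a', p x a' := fun x =>
    Finset.sum_pos (fun a _ => hp0 x a) Finset.univ_nonempty
  have hA : ∀ a : A, 0 < ∑ x', p x' a := fun a =>
    Finset.sum_pos (fun x _ => hp0 x a) Finset.univ_nonempty
  rw [Finset.sum_comm]
  apply Finset.sum_le_sum
  intro a _
  have key : ∑ x, (∑ a', p x a') * Real.log (p x a / ∑ a', p x a')
      ≤ Real.log (∑ x', p x' a) := by
    have h := (strictConcaveOn_log_Ioi.concaveOn).le_map_sum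
      (t := Finset.univ) (w := fun x => ∑ a', p x a')
      (p := fun x => p x a / ∑ a', p x a')
      (fun x _ => (hX x).le) hp1 (fun x _ => div_pos (hp0 x a) (hX x))
    have hs : ∑ x, (∑ a', p x a') * (p x a / ∑ a', p x a') = ∑ x', p x' a := by
      refine Finset.sum_congr rfl fun x _ => ?_
      rw [mul_comm, div_mul_cancel₀ _ (hX x).ne']
    simpa [smul_eq_mul, hs] using h
  calc ∑ x, (∑ a', p x a') * (∑ x', p x' a) * Real.log (p x a / ∑ a', p x a')
      = (∑ x', p x' a) * ∑ x, (∑ a', p x a') * Real.log (p x a / ∑ a', p x a') := by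
        rw [Finset.mul_sum]; exact Finset.sum_congr rfl fun x _ => by ring
    _ ≤ (∑ x', p x' a) * Real.log (∑ x', p x' a) :=
        mul_le_mul_of_nonneg_left key (hA a).le
end
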